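/- Let c_1, c_2 > 0 and 0 < h ≤ τ < c_1/c_2. Let U : [a, a+h] → ℝ be continuously differentiable with U(t) > 0 for all t ∈ [a, a+h], and suppose that for all t ∈ [a, a+h], U̇(t) ≤ −c_1 U(t) + c_2 τ √(U(t) · U(a)). Then U(a+h) ≤ ρ² U(a), where ρ = e^{−c_1 h/2}(1 − c_2τ/c_1) + c_2τ/c_1 satisfies 0 < ρ < 1. -/

import Mathlib

/-- if `U > 0` is continuously differentiable on `[a, a+h]` with
`0 < h ≤ τ < c₁/c₂` and `U̇(t) ≤ −c₁U(t) + c₂τ√(U(t)U(a))`, then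
`U(a+h) ≤ ρ²U(a)` where `ρ = e^{−c₁h/2}(1 − c₂τ/c₁) + c₂τ/c₁ ∈ (0,1)`. -/
theorem stmt10 (a h τ c₁ c₂ : ℝ) (hc₁ : 0 < c₁) (hc₂ : 0 < c₂)
    (hh : 0 < h) (hhτ : h ≤ τ) (hτ : τ < c₁ / c₂)
    (U U' : ℝ → ℝ)
    (hderiv : ∀ t ∈ Set.Icc a (a + h), HasDerivWithinAt U (U' t) (Set.Icc a (a + h)) t)
    (hcont : ContinuousOn U' (Set.Icc a (a + h)))
    (hpos : ∀ t ∈ Set.Icc a (a + h), 0 < U t)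
    (hineq : ∀ t ∈ Set.Icc a (a + h),
      U' t ≤ -c₁ * U t + c₂ * τ * Real.sqrt (U t * U a)) :
    0 < Real.exp (-c₁ * h / 2) * (1 - c₂ * τ / c₁) + c₂ * τ / c₁ ∧
    Real.exp (-c₁ * h / 2) * (1 - c₂ * τ / c₁) + c₂ * τ / c₁ < 1 ∧
    U (a + h) ≤ (Real.exp (-c₁ * h / 2) * (1 - c₂ * τ / c₁) + c₂ * τ / c₁) ^ 2 * U a := by
  have hma : a ∈ Set.Icc a (a + h) := by constructor <;> linarith
  have hmb : a + h ∈ Set.Icc a (a + h) := by constructor <;> linarith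
  have hUa : 0 < U a := hpos a hma
  have hsa : 0 < Real.sqrt (U a) := Real.sqrt_pos.mpr hUa
  set m : ℝ := c₂ * τ / c₁ with hm
  have hτ0 : 0 < τ := lt_of_lt_of_le hh hhτ
  have hm0 : 0 < m := div_pos (mul_pos hc₂ hτ0) hc₁
  have hcτ : c₂ * τ < c₁ := by
    have := (lt_div_iff₀ hc₂).mp hτ; linarith
  have hm1 : m < 1 := (div_lt_one hc₁).mpr hcτ
  set M : ℝ := m * Real.sqrt (U a) with hM
  set W : ℝ → ℝ := fun t => Real.exp (c₁ / 2 * (t - a)) * (Real.sqrt (U t) - M) with hW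
  -- derivative computation on the interior
  have hWderiv : ∀ x ∈ Set.Ioo a (a + h),
      HasDerivAt W (Real.exp (c₁ / 2 * (x - a)) * (c₁ / 2) * (Real.sqrt (U x) - M)
        + Real.exp (c₁ / 2 * (x - a)) * (U' x / (2 * Real.sqrt (U x)))) x := by
    intro x hx
    have hxI : x ∈ Set.Icc a (a + h) := Set.Ioo_subset_Icc_self hx
    have hU : HasDerivAt U (U' x) x :=
      (hderiv x hxI).hasDerivAt (Icc_mem_nhds hx.1 hx.2)
    have hV : HasDerivAt (fun t => Real.sqrt (U t)) (U' x / (2 * Real.sqrt (U x))) x :=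
      hU.sqrt (hpos x hxI).ne'
    have h1 : HasDerivAt (fun t => c₁ / 2 * (t - a)) (c₁ / 2) x := by
      simpa using ((hasDerivAt_id x).sub_const a).const_mul (c₁ / 2)
    have hE : HasDerivAt (fun t => Real.exp (c₁ / 2 * (t - a)))
        (Real.exp (c₁ / 2 * (x - a)) * (c₁ / 2)) x := h1.exp
    have h2 := hE.mul (hV.sub_const M)
    exact h2.congr_deriv (by ring)
  have hUcont : ContinuousOn U (Set.Icc a (a + h)) :=
    fun t ht => (hderiv t ht).continuousWithinAt
  have hWcont : ContinuousOn W (Set.Icc a (a + h)) := by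
    apply ContinuousOn.mul
    · exact (Real.continuous_exp.comp (by continuity)).continuousOn
    · exact (Real.continuous_sqrt.comp_continuousOn hUcont).sub continuousOn_const
  have hanti : AntitoneOn W (Set.Icc a (a + h)) := by
    apply antitoneOn_of_deriv_nonpos (convex_Icc a (a + h)) hWcont
    · intro x hx
      rw [interior_Icc] at hx
      exact (hWderiv x hx).differentiableAt.differentiableWithinAt
    · intro x hx
      rw [interior_Icc] at hx
      have hd := hWderiv x hx
      rw [hd.deriv]
      have hxI : x ∈ Set.Icc a (a + h) := Set.Ioo_subset_Icc_self hx
      set s : ℝ := Real.sqrt (U x) with hs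
      have hs0 : 0 < s := Real.sqrt_pos.mpr (hpos x hxI)
      have hs2 : s ^ 2 = U x := Real.sq_sqrt (hpos x hxI).le
      have hsplit : Real.sqrt (U x * U a) = s * Real.sqrt (U a) :=
        Real.sqrt_mul (hpos x hxI).le _
      have hin := hineq x hxI
      rw [hsplit] at hin
      have hdivle : U' x / (2 * s) ≤ -(c₁ / 2) * s + c₂ * τ / 2 * Real.sqrt (U a) := by
        rw [div_le_iff₀ (by positivity)]
        nlinarith [hin, hs2]
      have hMeq : c₁ / 2 * M = c₂ * τ / 2 * Real.sqrt (U a) := by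
        rw [hM, hm]; field_simp
      have hE0 : 0 < Real.exp (c₁ / 2 * (x - a)) := Real.exp_pos _
      have hbr : c₁ / 2 * (s - M) + U' x / (2 * s) ≤ 0 := by linarith [hdivle, hMeq]
      have h5 : 0 ≤ Real.exp (c₁ / 2 * (x - a)) * -(c₁ / 2 * (s - M) + U' x / (2 * s)) :=
        mul_nonneg hE0.le (neg_nonneg.mpr hbr)
      nlinarith [h5]
  have hkey := hanti hma hmb (by linarith)
  -- unfold W at the endpoints
  have hWa : W a = Real.sqrt (U a) - M := by simp [hW]
  have hWb : W (a + h) = Real.exp (c₁ / 2 * h) * (Real.sqrt (U (a + h)) - M) := by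
    simp [hW]
  rw [hWa, hWb] at hkey
  set E : ℝ := Real.exp (-c₁ * h / 2) with hE
  have hE0 : 0 < E := Real.exp_pos _
  have hEmul : Real.exp (c₁ / 2 * h) * E = 1 := by
    have hz : c₁ / 2 * h + -c₁ * h / 2 = 0 := by ring
    rw [hE, ← Real.exp_add, hz, Real.exp_zero]
  have hE1 : E < 1 := by
    rw [hE]
    refine Real.exp_lt_one_iff.mpr ?_
    have : 0 < c₁ * h := mul_pos hc₁ hh
    linarith
  have hρ0 : 0 < E * (1 - m) + m := by
    have : 0 < E * (1 - m) := mul_pos hE0 (by linarith)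
    linarith
  have hρ1 : E * (1 - m) + m < 1 := by
    have h3 : (E - 1) * (1 - m) < 0 := mul_neg_of_neg_of_pos (by linarith) (by linarith)
    have h4 : E * (1 - m) + m - 1 = (E - 1) * (1 - m) := by ring
    linarith
  refine ⟨hρ0, hρ1, ?_⟩
  -- from hkey: √(U(a+h)) ≤ (E*(1-m)+m) * √(U a)
  have hVb : Real.sqrt (U (a + h)) ≤ (E * (1 - m) + m) * Real.sqrt (U a) := by
    have h2 : E * (Real.exp (c₁ / 2 * h) * (Real.sqrt (U (a + h)) - M))
        ≤ E * (Real.sqrt (U a) - M) := by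
      exact mul_le_mul_of_nonneg_left hkey hE0.le
    rw [← mul_assoc, mul_comm E, hEmul, one_mul] at h2
    rw [hM] at h2
    linarith [h2]
  have hVb0 : 0 ≤ Real.sqrt (U (a + h)) := Real.sqrt_nonneg _
  have hsq : Real.sqrt (U (a + h)) ^ 2 ≤ ((E * (1 - m) + m) * Real.sqrt (U a)) ^ 2 :=
    pow_le_pow_left₀ hVb0 hVb 2
  rw [Real.sq_sqrt (hpos _ hmb).le] at hsq
  calc U (a + h) ≤ ((E * (1 - m) + m) * Real.sqrt (U a)) ^ 2 := hsq
    _ = (E * (1 - m) + m) ^ 2 * Real.sqrt (U a) ^ 2 := by ring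
    _ = (E * (1 - m) + m) ^ 2 * U a := by rw [Real.sq_sqrt hUa.le]
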